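/- Let R be a real p×p positive semidefinite symmetric matrix, λ ≥ 0, y ∈ ℝᵖ, and let P : ℝᵖ → ℝ be convex and homogeneous of order one (P(c·x) = c·P(x) for all c > 0 and all x ∈ ℝᵖ). Suppose v̂ ∈ ℝᵖ minimizes the penalized regression objective f(v) := (1/2)·(y − v)ᵀ·R·(y − v) + λ·P(v) over ℝᵖ. Then: (i) if v̂ᵀ·R·v̂ > 0, the vector v* := v̂ / sqrt(v̂ᵀ·R·v̂) maximizes g(v) := yᵀ·R·v − λ·P(v) over the set {v ∈ ℝᵖ : vᵀ·R·v ≤ 1}; and (ii) if v̂ = 0, then v* = 0 maximizes g over {v ∈ ℝᵖ : vᵀ·R·v ≤ 1}. -/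

import Mathlib

open Matrix

/-- GPMF coordinate update (Theorem on the single-factor GPMF solution): if v̂
minimizes the penalized regression objective
f(v) = (1/2)(y − v)ᵀR(y − v) + λP(v) with P convex and homogeneous of order
one, then (i) if v̂ᵀRv̂ > 0, the rescaled vector v* = v̂/‖v̂‖_R lies in the set
{v : vᵀRv ≤ 1} and maximizes g(v) = yᵀRv − λP(v) over that set; and (ii) if
v̂ = 0, then v* = 0 maximizes g over that set. -/
theorem gpmf_coordinate_update {p : ℕ}
    (R : Matrix (Fin p) (Fin p) ℝ) (hR : R.PosSemidef)
    (lam : ℝ) (hlam : 0 ≤ lam) (y : Fin p → ℝ)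
    (P : (Fin p → ℝ) → ℝ)
    (hPconv : ConvexOn ℝ Set.univ P)
    (hPhom : ∀ c : ℝ, 0 < c → ∀ x : Fin p → ℝ, P (c • x) = c * P x)
    (vhat : Fin p → ℝ)
    (hmin : ∀ v : Fin p → ℝ,
      (1 / 2) * ((y - vhat) ⬝ᵥ R.mulVec (y - vhat)) + lam * P vhat ≤
        (1 / 2) * ((y - v) ⬝ᵥ R.mulVec (y - v)) + lam * P v) :
    (0 < vhat ⬝ᵥ R.mulVec vhat →
      ((Real.sqrt (vhat ⬝ᵥ R.mulVec vhat))⁻¹ • vhat) ⬝ᵥ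
          R.mulVec ((Real.sqrt (vhat ⬝ᵥ R.mulVec vhat))⁻¹ • vhat) ≤ 1 ∧
      ∀ v : Fin p → ℝ, v ⬝ᵥ R.mulVec v ≤ 1 →
        y ⬝ᵥ R.mulVec v - lam * P v ≤
          y ⬝ᵥ R.mulVec ((Real.sqrt (vhat ⬝ᵥ R.mulVec vhat))⁻¹ • vhat) -
            lam * P ((Real.sqrt (vhat ⬝ᵥ R.mulVec vhat))⁻¹ • vhat)) ∧
    (vhat = 0 →
      ∀ v : Fin p → ℝ, v ⬝ᵥ R.mulVec v ≤ 1 →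
        y ⬝ᵥ R.mulVec v - lam * P v ≤
          y ⬝ᵥ R.mulVec (0 : Fin p → ℝ) - lam * P (0 : Fin p → ℝ)) := by
  -- symmetry of the quadratic form
  have hT : Rᵀ = R := by simpa [Matrix.conjTranspose, Matrix.IsSymm] using hR.1
  have hsym : ∀ a b : Fin p → ℝ, a ⬝ᵥ R.mulVec b = b ⬝ᵥ R.mulVec a := by
    intro a b
    rw [Matrix.dotProduct_mulVec, ← Matrix.mulVec_transpose, hT, dotProduct_comm]
  have hQ0 : ∀ v : Fin p → ℝ, 0 ≤ v ⬝ᵥ R.mulVec v := fun v => by simpa using hR.dotProduct_mulVec_nonneg v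
  have hQsmul : ∀ (c : ℝ) (v : Fin p → ℝ),
      (c • v) ⬝ᵥ R.mulVec (c • v) = c ^ 2 * (v ⬝ᵥ R.mulVec v) := by
    intro c v
    simp [Matrix.mulVec_smul, smul_dotProduct]
    ring
  have hLsmul : ∀ (c : ℝ) (v : Fin p → ℝ),
      y ⬝ᵥ R.mulVec (c • v) = c * (y ⬝ᵥ R.mulVec v) := by
    intro c v; simp [Matrix.mulVec_smul]
  -- the reformulated minimality: vhat maximizes g v - Q v / 2
  have hmin' : ∀ v : Fin p → ℝ,
      (y ⬝ᵥ R.mulVec v - lam * P v) - (v ⬝ᵥ R.mulVec v) / 2 ≤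
        (y ⬝ᵥ R.mulVec vhat - lam * P vhat) - (vhat ⬝ᵥ R.mulVec vhat) / 2 := by
    intro v
    have h1 := hmin v
    have e : ∀ w : Fin p → ℝ, (y - w) ⬝ᵥ R.mulVec (y - w) =
        y ⬝ᵥ R.mulVec y - 2 * (y ⬝ᵥ R.mulVec w) + w ⬝ᵥ R.mulVec w := by
      intro w
      have := hsym w y
      simp [Matrix.mulVec_sub, sub_dotProduct, dotProduct_sub]
      linarith
    rw [e v, e vhat] at h1
    linarith
  -- key scaling inequality
  have key : ∀ c : ℝ, 0 < c → ∀ v : Fin p → ℝ,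
      c * (y ⬝ᵥ R.mulVec v - lam * P v) - c ^ 2 * (v ⬝ᵥ R.mulVec v) / 2 ≤
        (y ⬝ᵥ R.mulVec vhat - lam * P vhat) - (vhat ⬝ᵥ R.mulVec vhat) / 2 := by
    intro c hc v
    have := hmin' (c • v)
    rw [hQsmul, hLsmul, hPhom c hc] at this
    linarith
  constructor
  · -- case (i)
    intro hs
    set s := vhat ⬝ᵥ R.mulVec vhat with hs_def
    set r := Real.sqrt s with hr_def
    have hr : 0 < r := Real.sqrt_pos.mpr hs
    have hr2 : r ^ 2 = s := Real.sq_sqrt hs.le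
    set G := y ⬝ᵥ R.mulVec vhat - lam * P vhat with hG_def
    -- G = s
    have hGpos : 0 < G := by
      have := key (1/2) (by norm_num) vhat
      nlinarith
    have hGs : G = s := by
      set c := G / s with hc_def
      have hcs : c * s = G := div_mul_cancel₀ G (ne_of_gt hs)
      have h2 := key c (div_pos hGpos hs) vhat
      rw [← hG_def, ← hs_def] at h2
      have h4 : s * (c - 1) ^ 2 ≤ 0 := by nlinarith
      have h6 : (c - 1) ^ 2 = 0 := le_antisymm (by nlinarith [sq_nonneg (c - 1)]) (sq_nonneg _)
      have h7 : c = 1 := by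
        have := pow_eq_zero_iff (n := 2) (by norm_num) |>.mp h6
        linarith
      rw [h7, one_mul] at hcs
      linarith
    -- value of g at v*
    have hgstar : y ⬝ᵥ R.mulVec (r⁻¹ • vhat) - lam * P (r⁻¹ • vhat) = r := by
      rw [hLsmul, hPhom r⁻¹ (inv_pos.mpr hr) vhat]
      have : r⁻¹ * (y ⬝ᵥ R.mulVec vhat) - lam * (r⁻¹ * P vhat) = r⁻¹ * G := by ring
      rw [this, hGs]
      field_simp
      nlinarith
    constructor
    · rw [hQsmul]
      rw [← hs_def, ← hr2]
      rw [inv_pow]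
      field_simp
      exact le_rfl
    · intro v hv
      rw [hgstar]
      set g := y ⬝ᵥ R.mulVec v - lam * P v with hg_def
      rcases le_or_gt g 0 with hg | hg
      · linarith
      · rcases (hQ0 v).eq_or_lt with hq | hq
        · exfalso
          have := key (s / g) (div_pos hs hg) v
          rw [← hq] at this
          rw [hGs] at this
          have : (s / g) * g ≤ s / 2 := by linarith
          rw [div_mul_cancel₀ _ (ne_of_gt hg)] at this
          linarith
        · set q := v ⬝ᵥ R.mulVec v with hq_def
          set c := g / q with hc_def
          have hcq : c * q = g := div_mul_cancel₀ g (ne_of_gt hq)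
          have h2 := key c (div_pos hg hq) v
          rw [hGs, ← hg_def, ← hq_def] at h2
          have hcg : c * g = c ^ 2 * q := by rw [← hcq]; ring
          have h7 : c ^ 2 * q ≤ s := by clear_value c g q; linarith
          have h4 : g ^ 2 ≤ s * q := by
            have h8 := mul_le_mul_of_nonneg_right h7 hq.le
            calc g ^ 2 = c ^ 2 * q * q := by rw [← hcq]; ring
              _ ≤ s * q := h8
          have h5 : g ^ 2 ≤ r ^ 2 := by
            rw [hr2]; nlinarith
          nlinarith
  · -- case (ii)
    intro h0 v hv
    subst h0
    have hP0 : P 0 = 0 := by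
      have := hPhom 2 (by norm_num) 0
      simp at this
      linarith
    have hQ00 : (0 : Fin p → ℝ) ⬝ᵥ R.mulVec 0 = 0 := by simp
    have hL0 : y ⬝ᵥ R.mulVec (0 : Fin p → ℝ) = 0 := by simp
    rw [hL0, hP0]
    set g := y ⬝ᵥ R.mulVec v - lam * P v with hg_def
    by_contra hcon
    push_neg at hcon
    have hg : 0 < g := by linarith
    have := key g hg v
    rw [hL0, hP0, hQ00] at this
    simp at this
    nlinarith [hQ0 v]
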